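/- Let 𝒫 be a nonempty set of probability measures on a measurable space (Ω, ℱ). Let X_n, X : Ω → ℝ (n ≥ 1) be measurable functions that are P-integrable for every P ∈ 𝒫, with the family { ∫ X dP : P ∈ 𝒫 } bounded above. Suppose there is a measurable set N with sup_{P∈𝒫} P(N) = 0 such that for every ω ∉ N the sequence (X_n(ω)) is nondecreasing and converges to X(ω). Then the sequence sup_{P∈𝒫} ∫ X_n dP is nondecreasing and converges to sup_{P∈𝒫} ∫ X dP. -/

import Mathlib

open MeasureTheory Filter

/-- Monotone convergence for an upper expectation: if `X_n ↑ X` quasi-surely, then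
`sup_{P∈𝒫} ∫ X_n dP` is nondecreasing and converges to `sup_{P∈𝒫} ∫ X dP`. -/
theorem monotone_convergence_upper_expectation
    {Ω : Type*} [MeasurableSpace Ω] (Ps : Set (Measure Ω)) (hne : Ps.Nonempty)
    (hprob : ∀ P ∈ Ps, IsProbabilityMeasure P)
    (X : ℕ → Ω → ℝ) (X₀ : Ω → ℝ)
    (hXmeas : ∀ n, Measurable (X n)) (hX₀meas : Measurable X₀)
    (hXint : ∀ n, ∀ P ∈ Ps, Integrable (X n) P)
    (hX₀int : ∀ P ∈ Ps, Integrable X₀ P)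
    (hbdd : BddAbove (Set.range fun P : Ps => ∫ ω, X₀ ω ∂(P : Measure Ω)))
    (N : Set Ω) (hNmeas : MeasurableSet N)
    (hNnull : (⨆ P : Ps, (P : Measure Ω) N) = 0)
    (hmono : ∀ ω ∉ N, Monotone fun n => X n ω)
    (hconv : ∀ ω ∉ N, Tendsto (fun n => X n ω) atTop (nhds (X₀ ω))) :
    (Monotone fun n => ⨆ P : Ps, ∫ ω, X n ω ∂(P : Measure Ω)) ∧
      Tendsto (fun n => ⨆ P : Ps, ∫ ω, X n ω ∂(P : Measure Ω)) atTop
        (nhds (⨆ P : Ps, ∫ ω, X₀ ω ∂(P : Measure Ω))) := by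
  haveI : Nonempty Ps := hne.to_subtype
  -- N is null for each P
  have hN0 : ∀ P : Ps, (P : Measure Ω) N = 0 := by
    intro P
    have h := le_iSup (fun P : Ps => (P : Measure Ω) N) P
    rw [hNnull] at h
    exact le_antisymm h (zero_le)
  have hae : ∀ P : Ps, ∀ᵐ ω ∂(P : Measure Ω), ω ∉ N := by
    intro P
    exact (MeasureTheory.measure_eq_zero_iff_ae_notMem).mp (hN0 P)
  -- per-measure monotonicity of integrals
  have hf : ∀ P : Ps, Monotone fun n => ∫ ω, X n ω ∂(P : Measure Ω) := by
    intro P m n hmn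
    exact integral_mono_ae (hXint m P P.2) (hXint n P P.2)
      ((hae P).mono fun ω hω => hmono ω hω hmn)
  -- per-measure monotone convergence
  have hlim : ∀ P : Ps, Tendsto (fun n => ∫ ω, X n ω ∂(P : Measure Ω)) atTop
      (nhds (∫ ω, X₀ ω ∂(P : Measure Ω))) := by
    intro P
    exact integral_tendsto_of_tendsto_of_monotone (fun n => hXint n P P.2) (hX₀int P P.2)
      ((hae P).mono fun ω hω => hmono ω hω)
      ((hae P).mono fun ω hω => hconv ω hω)
  have hle : ∀ n (P : Ps), ∫ ω, X n ω ∂(P : Measure Ω) ≤ ∫ ω, X₀ ω ∂(P : Measure Ω) :=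
    fun n P => (hf P).ge_of_tendsto (hlim P) n
  obtain ⟨c, hc⟩ := hbdd
  have hcg : ∀ P : Ps, ∫ ω, X₀ ω ∂(P : Measure Ω) ≤ c := fun P => hc ⟨P, rfl⟩
  have hbdd_n : ∀ n, BddAbove (Set.range fun P : Ps => ∫ ω, X n ω ∂(P : Measure Ω)) := by
    intro n
    exact ⟨c, by rintro x ⟨P, rfl⟩; exact (hle n P).trans (hcg P)⟩
  have hmonoS : Monotone fun n => ⨆ P : Ps, ∫ ω, X n ω ∂(P : Measure Ω) := by
    intro m n hmn
    exact ciSup_mono (hbdd_n n) fun P => hf P hmn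
  refine ⟨hmonoS, ?_⟩
  have hSle : ∀ n, (⨆ P : Ps, ∫ ω, X n ω ∂(P : Measure Ω)) ≤
      ⨆ P : Ps, ∫ ω, X₀ ω ∂(P : Measure Ω) :=
    fun n => ciSup_le fun P => (hle n P).trans (le_ciSup ⟨c, hc⟩ P)
  have hbddS : BddAbove (Set.range fun n => ⨆ P : Ps, ∫ ω, X n ω ∂(P : Measure Ω)) :=
    ⟨⨆ P : Ps, ∫ ω, X₀ ω ∂(P : Measure Ω), by rintro x ⟨n, rfl⟩; exact hSle n⟩
  have htend := tendsto_atTop_ciSup hmonoS hbddS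
  have heq : (⨆ n, ⨆ P : Ps, ∫ ω, X n ω ∂(P : Measure Ω)) =
      ⨆ P : Ps, ∫ ω, X₀ ω ∂(P : Measure Ω) := by
    apply le_antisymm
    · exact ciSup_le hSle
    · refine ciSup_le fun P => ?_
      refine le_of_tendsto (hlim P) (Filter.Eventually.of_forall fun n => ?_)
      exact (le_ciSup (hbdd_n n) P).trans (le_ciSup hbddS n)
  rwa [heq] at htend
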